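/- Let A be an arbitrary commutative ring and m, n ≥ 1. For every r ≥ 0, substituting x_m = T and y_n = T into the polynomial c_r(x_1,…,x_m | y_1,…,y_n) yields the polynomial c_r(x_1,…,x_{m−1} | y_1,…,y_{n−1}) (formed with m−1 x-variables and n−1 y-variables); in particular the result does not depend on T, so c_r belongs to the algebra of supersymmetric polynomials. -/

import Mathlib

open MvPolynomial

noncomputable section

/-- The substitution `x_m = y_n = T`, landing in polynomials in `T` over the original ring
(the image only involves the remaining variables). -/
def psiSub (K : Type*) [CommSemiring K] (m n : ℕ) :
    MvPolynomial (Fin m ⊕ Fin n) K →ₐ[K] Polynomial (MvPolynomial (Fin m ⊕ Fin n) K) :=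
  MvPolynomial.aeval (Sum.elim
    (fun i : Fin m => if (i : ℕ) = m - 1 then Polynomial.X
      else Polynomial.C (MvPolynomial.X (Sum.inl i)))
    (fun j : Fin n => if (j : ℕ) = n - 1 then Polynomial.X
      else Polynomial.C (MvPolynomial.X (Sum.inr j))))

/-- `f` is supersymmetric: symmetric in the `x` and `y` variables separately, and
`(d/dT) f|_{x_m = y_n = T} = 0`. -/
def IsSupersymmetric (K : Type*) [CommSemiring K] (m n : ℕ)
    (f : MvPolynomial (Fin m ⊕ Fin n) K) : Prop :=
  (∀ σ : Equiv.Perm (Fin m), MvPolynomial.rename (Sum.map σ id) f = f) ∧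
  (∀ τ : Equiv.Perm (Fin n), MvPolynomial.rename (Sum.map id τ) f = f) ∧
  Polynomial.derivative (psiSub K m n f) = 0

/-- `c_r(x|y) = Σ_{i=0}^{min(r,m)} (−1)^{r−i} σ_i(x) h_{r−i}(y)`. -/
def cpoly (K : Type*) [CommRing K] (m n r : ℕ) : MvPolynomial (Fin m ⊕ Fin n) K :=
  ∑ i ∈ Finset.range (min r m + 1),
    (-1 : MvPolynomial (Fin m ⊕ Fin n) K) ^ (r - i) *
      (MvPolynomial.rename Sum.inl (MvPolynomial.esymm (Fin m) K i)) *
      (MvPolynomial.rename Sum.inr (MvPolynomial.hsymm (Fin n) K (r - i)))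

/-- σ_i(x_1,…,x_m), viewed in K[x_1,…,x_m,y_1,…,y_n]. -/
def sigmaX (K : Type*) [CommSemiring K] (m n i : ℕ) : MvPolynomial (Fin m ⊕ Fin n) K :=
  MvPolynomial.rename Sum.inl (MvPolynomial.esymm (Fin m) K i)

/-- σ_j(y_1,…,y_n), viewed in K[x_1,…,x_m,y_1,…,y_n]. -/
def sigmaY (K : Type*) [CommSemiring K] (m n j : ℕ) : MvPolynomial (Fin m ⊕ Fin n) K :=
  MvPolynomial.rename Sum.inr (MvPolynomial.esymm (Fin n) K j)

/-- The generators of the algebra `A_ns(m|n)` of nice supersymmetric polynomials: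
`c_r` (r ≥ 0), `σ_i(x)^p` (1 ≤ i ≤ m), `σ_j(y)^p` (1 ≤ j ≤ n) and
`u_k = σ_m(x)^k σ_n(y)^{p-k}` (0 < k < p). -/
def nsGens (K : Type*) [CommRing K] (p m n : ℕ) : Set (MvPolynomial (Fin m ⊕ Fin n) K) :=
  {f | ∃ r : ℕ, f = cpoly K m n r} ∪
  {f | ∃ i : ℕ, 1 ≤ i ∧ i ≤ m ∧ f = (sigmaX K m n i) ^ p} ∪
  {f | ∃ j : ℕ, 1 ≤ j ∧ j ≤ n ∧ f = (sigmaY K m n j) ^ p} ∪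
  {f | ∃ k : ℕ, 0 < k ∧ k < p ∧ f = (sigmaX K m n m) ^ k * (sigmaY K m n n) ^ (p - k)}

/-- The evaluation morphism `p_e` sending `x_i ↦ x_i` (i ≤ m), `y_j ↦ y_j` (j ≤ n) and the
remaining variables to `0`. -/
def pe (K : Type*) [CommSemiring K] (M N m n : ℕ) :
    MvPolynomial (Fin M ⊕ Fin N) K →ₐ[K] MvPolynomial (Fin m ⊕ Fin n) K :=
  MvPolynomial.aeval (Sum.elim
    (fun i : Fin M => if h : (i : ℕ) < m then MvPolynomial.X (Sum.inl ⟨(i : ℕ), h⟩) else 0)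
    (fun j : Fin N => if h : (j : ℕ) < n then MvPolynomial.X (Sum.inr ⟨(j : ℕ), h⟩) else 0))

end

noncomputable section

/-- The inclusion of `K[x_1,…,x_{m-1},y_1,…,y_{n-1}]` into `K[x_1,…,x_m,y_1,…,y_n]`. -/
def incl (K : Type*) [CommSemiring K] (m n : ℕ) :
    MvPolynomial (Fin (m - 1) ⊕ Fin (n - 1)) K →ₐ[K] MvPolynomial (Fin m ⊕ Fin n) K :=
  MvPolynomial.rename (Sum.map (Fin.castLE (Nat.sub_le m 1)) (Fin.castLE (Nat.sub_le n 1)))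

namespace CpolyAux

open MvPolynomial Finset

variable {K : Type*} [CommSemiring K]

lemma multiset_esymm_cons {R : Type*} [CommSemiring R] (a : R) (s : Multiset R) (i : ℕ) :
    (a ::ₘ s).esymm (i + 1) = s.esymm (i + 1) + a * s.esymm i := by
  simp only [Multiset.esymm, Multiset.powersetCard_cons, Multiset.map_add, Multiset.sum_add,
    Multiset.map_map, Function.comp_def, Multiset.prod_cons]
  rw [Multiset.sum_map_mul_left]

lemma aeval_esymm_succ {S : Type*} [CommSemiring S] [Algebra K S] {M : ℕ}
    (f : Fin (M + 1) → S) (i : ℕ) :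
    MvPolynomial.aeval f (esymm (Fin (M + 1)) K (i + 1)) =
      MvPolynomial.aeval (f ∘ Fin.castSucc) (esymm (Fin M) K (i + 1))
        + f (Fin.last M) * MvPolynomial.aeval (f ∘ Fin.castSucc) (esymm (Fin M) K i) := by
  rw [aeval_esymm_eq_multiset_esymm, aeval_esymm_eq_multiset_esymm,
    aeval_esymm_eq_multiset_esymm]
  have h : (Finset.univ.val.map f)
      = f (Fin.last M) ::ₘ (Finset.univ.val.map (f ∘ Fin.castSucc)) := by
    rw [Fin.univ_castSuccEmb, Finset.cons_val, Multiset.map_cons]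
    congr 1
    rw [Finset.map_val, Multiset.map_map]
    rfl
  rw [h, multiset_esymm_cons]

lemma hsymm_option (α : Type*) [Fintype α] [DecidableEq α] (j : ℕ) :
    hsymm (Option α) K (j + 1) =
      X none * hsymm (Option α) K j + rename some (hsymm α K (j + 1)) := by
  rw [hsymm, ← (symOptionSuccEquiv (α := α)).symm.sum_comp
    (fun s : Sym (Option α) (j+1) => (Multiset.map X s.1).prod), Fintype.sum_sum_type]
  congr 1
  · rw [hsymm, Finset.mul_sum]
    refine Finset.sum_congr rfl fun s _ => ?_
    show (Multiset.map X (none ::ₘ (s : Multiset (Option α)))).prod = _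
    rw [Multiset.map_cons, Multiset.prod_cons]
    rfl
  · rw [hsymm, map_sum]
    refine Finset.sum_congr rfl fun s _ => ?_
    show (Multiset.map X ((s.map Function.Embedding.some : Sym (Option α) (j+1)) :
        Multiset (Option α))).prod = _
    rw [Sym.coe_map, Multiset.map_map, ← Multiset.prod_hom _ (rename (R := K) (some : α → Option α)),
      Multiset.map_map]
    simp [Function.comp_def]

lemma hsymm_fin_succ {N : ℕ} (j : ℕ) :
    hsymm (Fin (N + 1)) K (j + 1) =
      X (Fin.last N) * hsymm (Fin (N + 1)) K j
        + rename Fin.castSucc (hsymm (Fin N) K (j + 1)) := by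
  have h := congrArg (rename (finSuccEquivLast (n := N)).symm) (hsymm_option (K := K) (Fin N) j)
  rw [rename_hsymm] at h
  rw [h, map_add, map_mul, rename_X, rename_rename, rename_hsymm, finSuccEquivLast_symm_none]
  congr 1
  have : ((finSuccEquivLast (n := N)).symm : Option (Fin N) → Fin (N+1)) ∘ some
      = Fin.castSucc := funext fun i => finSuccEquivLast_symm_some i
  rw [this]

lemma esymm_card_lt {M k : ℕ} (h : M < k) : esymm (Fin M) K k = 0 := by
  rw [esymm]
  have : Finset.powersetCard k (Finset.univ : Finset (Fin M)) = ∅ := by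
    apply Finset.powersetCard_eq_empty.mpr
    simpa using h
  rw [this, Finset.sum_empty]

/-- Abstract telescoping lemma. -/
lemma key {P : Type*} [CommRing P] (T : P) (a b A H : ℕ → P)
    (hA0 : A 0 = 1) (ha0 : a 0 = 1)
    (hA : ∀ i, A (i + 1) = a (i + 1) + T * a i)
    (hH0 : H 0 = 1) (hb0 : b 0 = 1)
    (hH : ∀ j, H (j + 1) = T * H j + b (j + 1))
    (M : ℕ) (haM : a (M + 1) = 0) (r : ℕ) :
    ∑ i ∈ Finset.range (min r (M + 1) + 1), (-1 : P) ^ (r - i) * A i * H (r - i)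
      = ∑ i ∈ Finset.range (min r M + 1), (-1 : P) ^ (r - i) * a i * b (r - i) := by
  rcases r with _ | s
  · simp [hA0, ha0, hH0, hb0]
  have aux : ∀ k, k ≤ s →
      ∑ i ∈ Finset.range (k + 1), (-1 : P) ^ (s + 1 - i) * A i * H (s + 1 - i)
        = ∑ i ∈ Finset.range (k + 1), (-1 : P) ^ (s + 1 - i) * a i * b (s + 1 - i)
          + (-1 : P) ^ (s + 1 - k) * T * a k * H (s - k) := by
    intro k
    induction k with
    | zero =>
      intro _
      rw [Finset.sum_range_one, Finset.sum_range_one, Nat.sub_zero, Nat.sub_zero, hA0, ha0, hH s]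
      ring
    | succ k ih =>
      intro hk
      have hks : k ≤ s := Nat.le_of_succ_le hk
      obtain ⟨j, hj⟩ : ∃ j, s - k = j + 1 := ⟨s - (k + 1), by omega⟩
      have h1 : s + 1 - (k + 1) = j + 1 := by omega
      have h2 : s + 1 - k = j + 2 := by omega
      have h3 : s - (k + 1) = j := by omega
      rw [Finset.sum_range_succ, Finset.sum_range_succ (fun i => (-1:P)^(s+1-i) * a i * b (s+1-i)),
        ih hks]
      rw [h1, h2, hj, h3, hA k, hH j]
      ring
  by_cases hrM : s + 1 ≤ M
  · have h1 : min (s + 1) (M + 1) = s + 1 := by omega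
    have h2 : min (s + 1) M = s + 1 := by omega
    rw [h1, h2]
    rw [Finset.sum_range_succ, Finset.sum_range_succ
      (fun i => (-1:P)^(s+1-i) * a i * b (s+1-i)), aux s le_rfl]
    have e2 : s + 1 - s = 1 := by omega
    rw [Nat.sub_self, Nat.sub_self, e2, hH0, hb0, hA s]
    ring
  · have hMs : M ≤ s := by omega
    have h1 : min (s + 1) (M + 1) = M + 1 := by omega
    have h2 : min (s + 1) M = M := by omega
    rw [h1, h2]
    rw [Finset.sum_range_succ, aux M hMs]
    have h3 : s + 1 - M = (s - M) + 1 := by omega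
    have h4 : s + 1 - (M + 1) = s - M := by omega
    rw [h3, h4, hA M, haM]
    ring

lemma algHom_rename {σ τ S : Type*} [CommSemiring S] [Algebra K S]
    (ψ : MvPolynomial τ K →ₐ[K] S) (f : σ → τ) (p : MvPolynomial σ K) :
    ψ (rename f p) = MvPolynomial.aeval (fun i => ψ (X (f i))) p := by
  conv_lhs => rw [aeval_unique ψ, aeval_rename]
  rfl

lemma cpoly_symm_x (K : Type*) [CommRing K] (m n r : ℕ) (σ : Equiv.Perm (Fin m)) :
    rename (Sum.map σ id) (cpoly K m n r) = cpoly K m n r := by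
  rw [cpoly, map_sum]
  refine Finset.sum_congr rfl fun i _ => ?_
  rw [map_mul, map_mul, map_pow, map_neg, map_one, rename_rename, rename_rename]
  have h1 : Sum.map (⇑σ) (id : Fin n → Fin n) ∘ Sum.inl = Sum.inl ∘ ⇑σ := rfl
  have h2 : Sum.map (⇑σ) (id : Fin n → Fin n) ∘ Sum.inr = Sum.inr := rfl
  rw [h1, h2, ← rename_rename, rename_esymm]

lemma cpoly_symm_y (K : Type*) [CommRing K] (m n r : ℕ) (τ : Equiv.Perm (Fin n)) :
    rename (Sum.map id τ) (cpoly K m n r) = cpoly K m n r := by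
  rw [cpoly, map_sum]
  refine Finset.sum_congr rfl fun i _ => ?_
  rw [map_mul, map_mul, map_pow, map_neg, map_one, rename_rename, rename_rename]
  have h1 : Sum.map (id : Fin m → Fin m) (⇑τ) ∘ Sum.inl = Sum.inl := rfl
  have h2 : Sum.map (id : Fin m → Fin m) (⇑τ) ∘ Sum.inr = Sum.inr ∘ ⇑τ := rfl
  rw [h1, h2, ← rename_rename, rename_hsymm]

section Concrete

variable (K : Type*) [CommRing K] (M N : ℕ)

/-- `C ∘ incl` as an algebra hom. -/
def ψh : MvPolynomial (Fin M ⊕ Fin N) K →ₐ[K]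
    Polynomial (MvPolynomial (Fin (M + 1) ⊕ Fin (N + 1)) K) :=
  Polynomial.CAlgHom.comp (incl K (M + 1) (N + 1))

lemma psiSub_X_inl_castSucc (k : Fin M) :
    psiSub K (M + 1) (N + 1) (X (Sum.inl (Fin.castSucc k))) = ψh K M N (X (Sum.inl k)) := by
  have hk : ¬ (k : ℕ) = M := k.2.ne
  have l1 : psiSub K (M + 1) (N + 1) (X (Sum.inl (Fin.castSucc k)))
      = Polynomial.C (X (Sum.inl (Fin.castSucc k))) := by
    simp [psiSub, hk]
  have l2 : ψh K M N (X (Sum.inl k)) = Polynomial.C (X (Sum.inl (Fin.castSucc k))) := by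
    show (Polynomial.CAlgHom (R := K)) (incl K (M + 1) (N + 1) (X (Sum.inl k))) = _
    rw [incl, rename_X]
    rfl
  rw [l1, l2]

lemma psiSub_X_inr_castSucc (k : Fin N) :
    psiSub K (M + 1) (N + 1) (X (Sum.inr (Fin.castSucc k))) = ψh K M N (X (Sum.inr k)) := by
  have hk : ¬ (k : ℕ) = N := k.2.ne
  have l1 : psiSub K (M + 1) (N + 1) (X (Sum.inr (Fin.castSucc k)))
      = Polynomial.C (X (Sum.inr (Fin.castSucc k))) := by
    simp [psiSub, hk]
  have l2 : ψh K M N (X (Sum.inr k)) = Polynomial.C (X (Sum.inr (Fin.castSucc k))) := by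
    show (Polynomial.CAlgHom (R := K)) (incl K (M + 1) (N + 1) (X (Sum.inr k))) = _
    rw [incl, rename_X]
    rfl
  rw [l1, l2]

lemma psiSub_X_inl_last :
    psiSub K (M + 1) (N + 1) (X (Sum.inl (Fin.last M))) = Polynomial.X := by
  simp [psiSub]

lemma psiSub_X_inr_last :
    psiSub K (M + 1) (N + 1) (X (Sum.inr (Fin.last N))) = Polynomial.X := by
  simp [psiSub]

lemma AA_succ (i : ℕ) :
    psiSub K (M + 1) (N + 1) (rename Sum.inl (esymm (Fin (M + 1)) K (i + 1)))
      = ψh K M N (rename Sum.inl (esymm (Fin M) K (i + 1)))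
        + Polynomial.X * ψh K M N (rename Sum.inl (esymm (Fin M) K i)) := by
  rw [algHom_rename (psiSub K (M + 1) (N + 1)) Sum.inl, aeval_esymm_succ]
  have hf : ((fun k : Fin (M + 1) => psiSub K (M + 1) (N + 1) (X (Sum.inl k))) ∘ Fin.castSucc)
      = fun k : Fin M => ψh K M N (X (Sum.inl k)) :=
    funext fun k => by simp only [Function.comp_apply]; exact psiSub_X_inl_castSucc K M N k
  rw [hf, psiSub_X_inl_last, ← algHom_rename (ψh K M N) Sum.inl,
    ← algHom_rename (ψh K M N) Sum.inl]

lemma HH_succ (j : ℕ) :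
    psiSub K (M + 1) (N + 1) (rename Sum.inr (hsymm (Fin (N + 1)) K (j + 1)))
      = Polynomial.X * psiSub K (M + 1) (N + 1) (rename Sum.inr (hsymm (Fin (N + 1)) K j))
        + ψh K M N (rename Sum.inr (hsymm (Fin N) K (j + 1))) := by
  rw [hsymm_fin_succ]
  simp only [map_add, map_mul, rename_X, rename_rename]
  rw [psiSub_X_inr_last]
  congr 1
  rw [algHom_rename (psiSub K (M + 1) (N + 1)) (Sum.inr ∘ Fin.castSucc)]
  have hf : (fun k : Fin N =>
        psiSub K (M + 1) (N + 1) (X ((Sum.inr ∘ Fin.castSucc) k)))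
      = fun k : Fin N => ψh K M N (X (Sum.inr k)) :=
    funext fun k => by simp only [Function.comp_apply]; exact psiSub_X_inr_castSucc K M N k
  rw [hf, ← algHom_rename (ψh K M N) Sum.inr]

lemma cpoly_psiSub_eq (r : ℕ) :
    psiSub K (M + 1) (N + 1) (cpoly K (M + 1) (N + 1) r)
      = Polynomial.C (incl K (M + 1) (N + 1) (cpoly K M N r)) := by
  calc psiSub K (M + 1) (N + 1) (cpoly K (M + 1) (N + 1) r)
      = ∑ i ∈ Finset.range (min r (M + 1) + 1),
          (-1 : Polynomial (MvPolynomial (Fin (M + 1) ⊕ Fin (N + 1)) K)) ^ (r - i)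
            * (psiSub K (M + 1) (N + 1) (rename Sum.inl (esymm (Fin (M + 1)) K i)))
            * (psiSub K (M + 1) (N + 1) (rename Sum.inr (hsymm (Fin (N + 1)) K (r - i)))) := by
        rw [cpoly, map_sum]
        refine Finset.sum_congr rfl fun i _ => ?_
        rw [map_mul, map_mul, map_pow, map_neg, map_one]
    _ = ∑ i ∈ Finset.range (min r M + 1),
          (-1 : Polynomial (MvPolynomial (Fin (M + 1) ⊕ Fin (N + 1)) K)) ^ (r - i)
            * (ψh K M N (rename Sum.inl (esymm (Fin M) K i)))
            * (ψh K M N (rename Sum.inr (hsymm (Fin N) K (r - i)))) := by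
        refine key Polynomial.X
          (fun i => ψh K M N (rename Sum.inl (esymm (Fin M) K i)))
          (fun j => ψh K M N (rename Sum.inr (hsymm (Fin N) K j)))
          (fun i => psiSub K (M + 1) (N + 1) (rename Sum.inl (esymm (Fin (M + 1)) K i)))
          (fun j => psiSub K (M + 1) (N + 1) (rename Sum.inr (hsymm (Fin (N + 1)) K j)))
          ?_ ?_ (AA_succ K M N) ?_ ?_ (HH_succ K M N) M ?_ r
        · simp [esymm_zero]
        · simp [esymm_zero]
        · simp [hsymm_zero]
        · simp [hsymm_zero]
        · show (ψh K M N) ((rename Sum.inl) (esymm (Fin M) K (M + 1))) = 0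
          rw [esymm_card_lt (Nat.lt_succ_self M)]
          simp
    _ = Polynomial.C (incl K (M + 1) (N + 1) (cpoly K M N r)) := by
        rw [cpoly, map_sum, map_sum]
        refine (Finset.sum_congr rfl fun i _ => ?_).symm
        conv_lhs => rw [show (Polynomial.C (incl K (M + 1) (N + 1)
          ((-1 : MvPolynomial (Fin M ⊕ Fin N) K) ^ (r - i)
            * rename Sum.inl (esymm (Fin M) K i)
            * rename Sum.inr (hsymm (Fin N) K (r - i))))) = ψh K M N
          ((-1) ^ (r - i) * rename Sum.inl (esymm (Fin M) K i)
            * rename Sum.inr (hsymm (Fin N) K (r - i))) from rfl]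
        rw [map_mul, map_mul, map_pow, map_neg, map_one]

end Concrete

end CpolyAux

/-- Substituting `x_m = y_n = T` into `c_r(x_1,…,x_m|y_1,…,y_n)` yields
`c_r(x_1,…,x_{m-1}|y_1,…,y_{n-1})`; in particular the result does not depend on `T`,
so `c_r` is supersymmetric. -/
theorem cpoly_subst (A : Type*) [CommRing A] (m n : ℕ) (hm : 1 ≤ m) (hn : 1 ≤ n) (r : ℕ) :
    psiSub A m n (cpoly A m n r) =
      Polynomial.C (incl A m n (cpoly A (m - 1) (n - 1) r)) ∧
    IsSupersymmetric A m n (cpoly A m n r) := by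
  obtain ⟨M, rfl⟩ : ∃ M, m = M + 1 := ⟨m - 1, by omega⟩
  obtain ⟨N, rfl⟩ : ∃ N, n = N + 1 := ⟨n - 1, by omega⟩
  have key1 := CpolyAux.cpoly_psiSub_eq A M N r
  exact ⟨key1, CpolyAux.cpoly_symm_x A (M + 1) (N + 1) r,
    CpolyAux.cpoly_symm_y A (M + 1) (N + 1) r,
    by rw [key1]; exact Polynomial.derivative_C⟩

end
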